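/- Trees of finite height, considered as partial orders (T, ≤), are pseudofinite: every first-order sentence in the language {≤} true in some finite-height tree is true in some finite tree. -/

import Mathlib

open FirstOrder Language

/-- The language with a single binary relation `≤`. -/
def LLE : FirstOrder.Language where
  Functions := fun _ => Empty
  Relations := fun n => match n with
    | 2 => Unit
    | _ => Empty

/-- The interpretation of the binary relation `≤`. -/
def leOn {M : Type*} (s : LLE.Structure M) (x y : M) : Prop :=
  s.RelMap (n := 2) (() : LLE.Relations 2) ![x, y]

/-- `M` is a tree as a partial order: `≤` is a partial order with a least element (the root) in
which the set of strict predecessors of every element is finite and linearly ordered. -/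
def IsOrderTree (M : Type*) (s : LLE.Structure M) : Prop :=
  (∀ x : M, leOn s x x) ∧
  (∀ x y : M, leOn s x y → leOn s y x → x = y) ∧
  (∀ x y z : M, leOn s x y → leOn s y z → leOn s x z) ∧
  (∃ r : M, ∀ x, leOn s r x) ∧
  (∀ x : M, {y | leOn s y x ∧ y ≠ x}.Finite) ∧
  (∀ x y z : M, leOn s y x → leOn s z x → (leOn s y z ∨ leOn s z y))

/-- `M` has height at most `h`: every element has at most `h` strict predecessors. -/
def OrderHeightLe (M : Type*) (s : LLE.Structure M) (h : ℕ) : Prop :=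
  ∀ x : M, {y | leOn s y x ∧ y ≠ x}.ncard ≤ h

open scoped Classical

namespace TreePF

/-- quantifier rank -/
def qr {L : Language} : ∀ {α : Type} {n : ℕ}, L.BoundedFormula α n → ℕ
  | _, _, .falsum => 0
  | _, _, .equal _ _ => 0
  | _, _, .rel _ _ => 0
  | _, _, .imp f g => max (qr f) (qr g)
  | _, _, .all f => qr f + 1

@[simp] lemma qr_imp {L : Language} {α : Type} {n : ℕ} (f g : L.BoundedFormula α n) :
    qr (f.imp g) = max (qr f) (qr g) := by simp [qr]

@[simp] lemma qr_all {L : Language} {α : Type} {n : ℕ} (f : L.BoundedFormula α (n+1)) :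
    qr f.all = qr f + 1 := by simp [qr]

/-- the index of the variable a term over `LLE` must be -/
def tvar {k : ℕ} : LLE.Term (Empty ⊕ Fin k) → Fin k
  | .var (Sum.inl e) => e.elim
  | .var (Sum.inr j) => j
  | .func f _ => (f : Empty).elim

lemma term_eval {M : Type} (sM : LLE.Structure M) {k : ℕ}
    (t : LLE.Term (Empty ⊕ Fin k)) (xs : Fin k → M) :
    @Term.realize LLE M sM _ (Sum.elim (fun e : Empty => e.elim) xs) t = xs (tvar t) := by
  cases t with
  | var v =>
    cases v with
    | inl e => exact e.elim
    | inr j => rfl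
  | func f ts => exact (f : Empty).elim

theorem transfer {M N : Type} (sM : LLE.Structure M) (sN : LLE.Structure N)
    (R : ℕ → ∀ k : ℕ, (Fin k → M) → (Fin k → N) → Prop)
    (hAtomLe : ∀ n k x y, R n k x y → ∀ i j : Fin k,
      (sM.RelMap (n := 2) (() : LLE.Relations 2) ![x i, x j] ↔
       sN.RelMap (n := 2) (() : LLE.Relations 2) ![y i, y j]))
    (hAtomEq : ∀ n k x y, R n k x y → ∀ i j : Fin k, (x i = x j ↔ y i = y j))
    (hForth : ∀ n k x y, R (n+1) k x y → ∀ a : M, ∃ b : N,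
      R n (k+1) (Fin.snoc x a) (Fin.snoc y b))
    (hBack : ∀ n k x y, R (n+1) k x y → ∀ b : N, ∃ a : M,
      R n (k+1) (Fin.snoc x a) (Fin.snoc y b)) :
    ∀ {k : ℕ} (φ : LLE.BoundedFormula Empty k) (n : ℕ), qr φ ≤ n →
      ∀ x y, R n k x y →
      (@BoundedFormula.Realize LLE M sM Empty k φ (fun e => e.elim) x ↔
       @BoundedFormula.Realize LLE N sN Empty k φ (fun e => e.elim) y) := by
  intro k φ
  induction φ with
  | falsum => intro n _ x y _; exact Iff.rfl
  | equal t₁ t₂ =>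
    intro n _ x y hR
    simp only [BoundedFormula.Realize, term_eval]
    exact hAtomEq n _ x y hR (tvar t₁) (tvar t₂)
  | @rel _ l R' ts =>
    intro n _ x y hR
    match l, R' with
    | 2, R' =>
      have hM : (fun i => @Term.realize LLE M sM _ (Sum.elim (fun e : Empty => e.elim) x) (ts i))
          = ![x (tvar (ts 0)), x (tvar (ts 1))] := by
        funext i
        fin_cases i <;> simp [term_eval] <;> rfl
      have hN : (fun i => @Term.realize LLE N sN _ (Sum.elim (fun e : Empty => e.elim) y) (ts i))
          = ![y (tvar (ts 0)), y (tvar (ts 1))] := by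
        funext i
        fin_cases i <;> simp [term_eval] <;> rfl
      simp only [BoundedFormula.Realize]
      rw [hM, hN]
      exact hAtomLe n _ x y hR (tvar (ts 0)) (tvar (ts 1))
    | 0, R' => exact (R' : Empty).elim
    | 1, R' => exact (R' : Empty).elim
    | (l+3), R' => exact (R' : Empty).elim
  | imp f g ihf ihg =>
    intro n hn x y hR
    rw [qr_imp, max_le_iff] at hn
    simp only [BoundedFormula.realize_imp]
    rw [ihf n hn.1 x y hR, ihg n hn.2 x y hR]
  | all f ih =>
    intro n hn x y hR
    rw [qr_all] at hn
    cases n with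
    | zero => omega
    | succ n =>
      simp only [BoundedFormula.realize_all]
      constructor
      · intro hall b
        obtain ⟨a, hab⟩ := hBack n _ x y hR b
        exact (ih n (by omega) _ _ hab).mp (hall a)
      · intro hall a
        obtain ⟨b, hab⟩ := hForth n _ x y hR a
        exact (ih n (by omega) _ _ hab).mpr (hall b)


open Set

structure Ctx (M : Type) where
  le : M → M → Prop
  r : M
  hrefl : ∀ x, le x x
  hanti : ∀ x y, le x y → le y x → x = y
  htrans : ∀ x y z, le x y → le y z → le x z
  hroot : ∀ x, le r x
  hfin : ∀ x, {y | le y x ∧ y ≠ x}.Finite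
  hlin : ∀ x y z, le y x → le z x → le y z ∨ le z y

namespace Ctx
variable {M : Type} (C : Ctx M)

def pred (x : M) : Set M := {y | C.le y x ∧ y ≠ x}
def below (x : M) : Set M := {y | C.le y x}
noncomputable def ht (x : M) : ℕ := (C.pred x).ncard

lemma pred_finite (x : M) : (C.pred x).Finite := C.hfin x
lemma below_eq (x : M) : C.below x = insert x (C.pred x) := by
  ext y; simp only [below, pred, Set.mem_insert_iff, Set.mem_setOf_eq]
  constructor
  · intro hy; by_cases h : y = x
    · exact Or.inl h
    · exact Or.inr ⟨hy, h⟩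
  · rintro (rfl | ⟨hy, _⟩)
    · exact C.hrefl y
    · exact hy
lemma below_finite (x : M) : (C.below x).Finite := by
  rw [C.below_eq]; exact (C.pred_finite x).insert x
lemma below_card (x : M) : (C.below x).ncard = C.ht x + 1 := by
  rw [C.below_eq, Set.ncard_insert_of_notMem (by simp [pred]) (C.pred_finite x)]; rfl

lemma pred_mono {x y : M} (hxy : C.le x y) : C.pred x ⊆ C.pred y := by
  rintro z ⟨hz, hzx⟩
  refine ⟨C.htrans _ _ _ hz hxy, ?_⟩
  rintro rfl
  exact hzx (C.hanti _ _ hxy hz).symm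
lemma ht_lt {x y : M} (hxy : C.le x y) (hne : x ≠ y) : C.ht x < C.ht y := by
  have h1 : C.below x ⊆ C.pred y := by
    intro z hz
    refine ⟨C.htrans _ _ _ hz hxy, ?_⟩
    rintro rfl
    exact hne (C.hanti _ _ hxy hz)
  have h2 : C.ht x + 1 ≤ C.ht y := by
    rw [← C.below_card]
    exact Set.ncard_le_ncard h1 (C.pred_finite y)
  omega
lemma ht_le {x y : M} (hxy : C.le x y) : C.ht x ≤ C.ht y := by
  by_cases h : x = y
  · subst h; rfl
  · exact (C.ht_lt hxy h).le
lemma eq_of_le_ht {x y : M} (hxy : C.le x y) (hht : C.ht y ≤ C.ht x) : x = y := by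
  by_contra h
  exact absurd hht (not_le.mpr (C.ht_lt hxy h))
lemma le_of_le_le_ht {x y c : M} (hx : C.le x c) (hy : C.le y c) (hht : C.ht x ≤ C.ht y) :
    C.le x y := by
  rcases C.hlin c x y hx hy with h | h
  · exact h
  · have he := C.eq_of_le_ht h hht
    rw [he]
    exact C.hrefl x
lemma comparable_eq {x y c : M} (hx : C.le x c) (hy : C.le y c) (hht : C.ht x = C.ht y) :
    x = y := by
  rcases C.hlin c x y hx hy with h | h
  · exact C.eq_of_le_ht h hht.ge
  · exact (C.eq_of_le_ht h hht.le).symm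

lemma ht_root : C.ht C.r = 0 := by
  have : C.pred C.r = ∅ := by
    ext y
    simp only [pred, Set.mem_setOf_eq, Set.mem_empty_iff_false, iff_false, not_and, ne_eq,
      not_not]
    intro hy
    exact C.hanti _ _ hy (C.hroot y)
  simp [ht, this]

lemma eq_root_of_ht_zero {x : M} (hx : C.ht x = 0) : x = C.r := by
  by_contra h
  have := C.ht_lt (C.hroot x) (fun he => h he.symm)
  omega

/-- there is a predecessor at every height -/
lemma predAt {x : M} {j : ℕ} (hj : j ≤ C.ht x) : ∃ z, C.le z x ∧ C.ht z = j := by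
  classical
  have hbf : (C.below x).Finite := C.below_finite x
  set T : Finset M := hbf.toFinset with hT
  have hinj : Set.InjOn C.ht (C.below x) := by
    intro a ha b hb hab
    exact C.comparable_eq ha hb hab
  have hTcard : T.card = C.ht x + 1 := by
    rw [← C.below_card]
    rw [hT, ← Set.ncard_eq_toFinset_card _ hbf]
  have himage : T.image C.ht = Finset.range (C.ht x + 1) := by
    apply Finset.eq_of_subset_of_card_le
    · intro j hj
      simp only [Finset.mem_image] at hj
      obtain ⟨a, ha, rfl⟩ := hj
      rw [hT, Set.Finite.mem_toFinset] at ha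
      simp only [Finset.mem_range]
      have := C.ht_le ha
      omega
    · rw [Finset.card_range, Finset.card_image_of_injOn
        (by rw [hT, Set.Finite.coe_toFinset]; exact hinj), hTcard]
  have : j ∈ T.image C.ht := by
    rw [himage, Finset.mem_range]; omega
  simp only [Finset.mem_image] at this
  obtain ⟨z, hz, hzj⟩ := this
  rw [hT, Set.Finite.mem_toFinset] at hz
  exact ⟨z, hz, hzj⟩

/-- children -/
def ch (x : M) : Set M := {c | C.le x c ∧ C.ht c = C.ht x + 1}

lemma ch_ne {x c : M} (hc : c ∈ C.ch x) : c ≠ x := by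
  rintro rfl
  have := hc.2
  omega

lemma parent_unique {x y c : M} (hx : c ∈ C.ch x) (hy : c ∈ C.ch y) : x = y := by
  apply C.comparable_eq hx.1 hy.1
  have := hx.2; have := hy.2; omega

/-- every strict upper element passes through a child -/
lemma child_step {x z : M} (hxz : C.le x z) (hne : x ≠ z) :
    ∃ c, c ∈ C.ch x ∧ C.le c z := by
  have hlt := C.ht_lt hxz hne
  obtain ⟨c, hcz, hch⟩ := C.predAt (x := z) (j := C.ht x + 1) (by omega)
  refine ⟨c, ⟨?_, hch⟩, hcz⟩
  exact C.le_of_le_le_ht hxz hcz (by omega)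

/-- a finite nonempty set all below `a` has a maximum -/
lemma exists_max {X : Set M} (hX : X.Finite) (hne : X.Nonempty) {a : M}
    (hbel : ∀ w ∈ X, C.le w a) : ∃ m ∈ X, C.le m a ∧ ∀ w ∈ X, C.le w m := by
  obtain ⟨m, hm, hmax⟩ := Set.exists_max_image X C.ht hX hne
  exact ⟨m, hm, hbel m hm, fun w hw =>
    C.le_of_le_le_ht (hbel w hw) (hbel m hm) (hmax w hw)⟩

lemma pred_of_le_child {x c w : M} (hc : c ∈ C.ch x) (hw : C.le w c) (hne : w ≠ c) :
    C.le w x := by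
  have h1 : C.ht w < C.ht c := C.ht_lt hw hne
  exact C.le_of_le_le_ht hw hc.1 (by have := hc.2; omega)


section EM

/-- truncated count -/
noncomputable def tmin (κ : ℕ) (A : Set M) : ℕ∞ := min A.encard (κ : ℕ∞)

lemma tmin_le_coe (κ : ℕ) (A : Set M) : tmin κ A ≤ (κ : ℕ∞) := min_le_right _ _
lemma tmin_ne_top (κ : ℕ) (A : Set M) : tmin κ A ≠ ⊤ :=
  fun hh => absurd (hh ▸ tmin_le_coe κ A) (by simp)
lemma tmin_le_encard (κ : ℕ) (A : Set M) : tmin κ A ≤ A.encard := min_le_left _ _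
lemma tmin_mono (κ : ℕ) {A B : Set M} (hAB : A ⊆ B) : tmin κ A ≤ tmin κ B :=
  min_le_min (Set.encard_mono hAB) le_rfl

variable (κ : ℕ)

/-- graded equivalence of subtrees, with counting threshold κ -/
def EM (C : Ctx M) (κ : ℕ) : ℕ → M → M → Prop
  | 0 => fun x y => C.ht x = C.ht y
  | (g+1) => fun x y => EM C κ g x y ∧
      ∀ z, tmin κ {c | c ∈ C.ch x ∧ EM C κ g c z} = tmin κ {c | c ∈ C.ch y ∧ EM C κ g c z}

lemma EM_zero {x y : M} : C.EM κ 0 x y ↔ C.ht x = C.ht y := Iff.rfl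
lemma EM_succ {g : ℕ} {x y : M} : C.EM κ (g+1) x y ↔ (C.EM κ g x y ∧
    ∀ z, tmin κ {c | c ∈ C.ch x ∧ C.EM κ g c z} = tmin κ {c | c ∈ C.ch y ∧ C.EM κ g c z}) :=
  Iff.rfl

lemma EM_ht {g : ℕ} {x y : M} (h : C.EM κ g x y) : C.ht x = C.ht y := by
  induction g with
  | zero => exact h
  | succ g ih => exact ih h.1

lemma EM_refl (g : ℕ) (x : M) : C.EM κ g x x := by
  induction g with
  | zero => rfl
  | succ g ih => exact ⟨ih, fun _ => rfl⟩

lemma EM_symm {g : ℕ} {x y : M} (h : C.EM κ g x y) : C.EM κ g y x := by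
  induction g generalizing x y with
  | zero => exact h.symm
  | succ g ih => exact ⟨ih h.1, fun z => (h.2 z).symm⟩

lemma EM_trans {g : ℕ} {x y z : M} (h1 : C.EM κ g x y) (h2 : C.EM κ g y z) :
    C.EM κ g x z := by
  induction g generalizing x y z with
  | zero => exact h1.trans h2
  | succ g ih => exact ⟨ih h1.1 h2.1, fun w => (h1.2 w).trans (h2.2 w)⟩

lemma EM_mono {g g' : ℕ} (hg : g' ≤ g) {x y : M} (h : C.EM κ g x y) : C.EM κ g' x y := by
  induction g with
  | zero => cases Nat.le_zero.mp hg; exact h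
  | succ g ih =>
    rcases Nat.lt_or_ge g' (g+1) with h' | h'
    · exact ih (by omega) h.1
    · have : g' = g + 1 := by omega
      subst this; exact h

/-- class membership is EM-invariant -/
lemma EM_class_eq {g : ℕ} {z z' : M} (h : C.EM κ g z z') (c : M) :
    C.EM κ g c z ↔ C.EM κ g c z' :=
  ⟨fun hc => C.EM_trans κ hc h, fun hc => C.EM_trans κ hc (C.EM_symm κ h)⟩

/-- abstract helper: a finite invariant implies finitely many classes -/
lemma reps_of_map {T : Type} [Finite T] (E : M → M → Prop) (φ : M → T)
    (hφ : ∀ x y, φ x = φ y → E x y) :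
    ∃ R : Set M, R.Finite ∧ ∀ x, ∃ z ∈ R, E x z := by
  classical
  refine ⟨Set.range (fun t : {t : T // ∃ x, φ x = t} => t.2.choose), Set.finite_range _, ?_⟩
  intro x
  refine ⟨(⟨φ x, x, rfl⟩ : {t : T // ∃ x, φ x = t}).2.choose, ⟨_, rfl⟩, ?_⟩
  exact hφ _ _ (⟨φ x, x, rfl⟩ : {t : T // ∃ x, φ x = t}).2.choose_spec.symm

variable (h : ℕ)

/-- finitely many EM-classes -/
lemma EM_reps (hhb : ∀ x : M, C.ht x ≤ h) (g : ℕ) :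
    ∃ R : Set M, R.Finite ∧ ∀ x, ∃ z ∈ R, C.EM κ g x z := by
  classical
  induction g with
  | zero =>
    exact reps_of_map (C.EM κ 0) (fun x => (⟨C.ht x, by have := hhb x; omega⟩ : Fin (h+1)))
      (fun x y hxy => by
        have := congrArg Fin.val hxy
        simpa [EM_zero] using this)
  | succ g ih =>
    obtain ⟨R, hRfin, hR⟩ := ih
    have : Finite ↥R := hRfin.to_subtype
    have hρex : ∀ x : M, ∃ z ∈ R, C.EM κ g x z := hR
    set ρ : M → ↥R := fun x => ⟨(hρex x).choose, (hρex x).choose_spec.1⟩ with hρ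
    have hρE : ∀ x, C.EM κ g x (ρ x).1 := fun x => (hρex x).choose_spec.2
    have hlt : ∀ (x : M) (z : ↥R),
        (tmin κ {c | c ∈ C.ch x ∧ C.EM κ g c z.1}).toNat < κ + 1 := by
      intro x z
      have h1 := tmin_le_coe (M := M) κ {c | c ∈ C.ch x ∧ C.EM κ g c z.1}
      have := ENat.toNat_le_toNat h1 (by simp)
      simpa using Nat.lt_succ_of_le this
    set ψ : M → (↥R → Fin (κ+1)) := fun x z =>
      ⟨(tmin κ {c | c ∈ C.ch x ∧ C.EM κ g c z.1}).toNat, hlt x z⟩ with hψ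
    refine reps_of_map (C.EM κ (g+1)) (fun x => (ρ x, ψ x)) ?_
    intro x y hxy
    have h1 : ρ x = ρ y := congrArg Prod.fst hxy
    have h2 : ψ x = ψ y := congrArg Prod.snd hxy
    have hExy : C.EM κ g x y := by
      have hx := hρE x
      have hy := hρE y
      rw [h1] at hx
      exact C.EM_trans κ hx (C.EM_symm κ hy)
    refine ⟨hExy, fun z => ?_⟩
    obtain ⟨zr, hzr, hzrE⟩ := hR z
    have hcl : ∀ w : M, {c | c ∈ C.ch w ∧ C.EM κ g c z} = {c | c ∈ C.ch w ∧ C.EM κ g c zr} := by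
      intro w; ext c
      simp only [Set.mem_setOf_eq, and_congr_right_iff]
      intro _; exact C.EM_class_eq κ hzrE c
    rw [hcl x, hcl y]
    have h3 : ψ x ⟨zr, hzr⟩ = ψ y ⟨zr, hzr⟩ := by rw [h2]
    have h4 := congrArg Fin.val h3
    simp only [hψ] at h4
    have hne1 := tmin_ne_top (M := M) κ {c | c ∈ C.ch x ∧ C.EM κ g c zr}
    have hne2 := tmin_ne_top (M := M) κ {c | c ∈ C.ch y ∧ C.EM κ g c zr}
    rw [← ENat.coe_toNat hne1, ← ENat.coe_toNat hne2, h4]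

end EM


section Sel
variable (κ h G₀ : ℕ) (hhb : ∀ x : M, C.ht x ≤ h)

/-- a finite set of representatives for `EM κ G₀` -/
noncomputable def Reps : Set M := (C.EM_reps κ h hhb G₀).choose
lemma Reps_finite : (C.Reps κ h G₀ hhb).Finite := (C.EM_reps κ h hhb G₀).choose_spec.1
lemma Reps_covers : ∀ x, ∃ z ∈ C.Reps κ h G₀ hhb, C.EM κ G₀ x z :=
  (C.EM_reps κ h hhb G₀).choose_spec.2

/-- the children of `v` in the `EM κ G₀`-class of `z` -/
def cls (v z : M) : Set M := {c | c ∈ C.ch v ∧ C.EM κ G₀ c z}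

/-- a subset of the class of truncated size -/
noncomputable def pick (v z : M) : Set M :=
  (Set.exists_subset_encard_eq (tmin_le_encard κ (C.cls κ G₀ v z))).choose

lemma pick_subset (v z : M) : C.pick κ G₀ v z ⊆ C.cls κ G₀ v z :=
  (Set.exists_subset_encard_eq (tmin_le_encard κ (C.cls κ G₀ v z))).choose_spec.1
lemma pick_encard (v z : M) : (C.pick κ G₀ v z).encard = tmin κ (C.cls κ G₀ v z) :=
  (Set.exists_subset_encard_eq (tmin_le_encard κ (C.cls κ G₀ v z))).choose_spec.2
lemma pick_finite (v z : M) : (C.pick κ G₀ v z).Finite := by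
  rw [← Set.encard_lt_top_iff, C.pick_encard κ G₀ v z]
  exact lt_of_le_of_lt (tmin_le_coe κ _) (by simp)

/-- the selected children of a node -/
noncomputable def selected (v : M) : Set M := ⋃ z ∈ C.Reps κ h G₀ hhb, C.pick κ G₀ v z

lemma selected_subset (v : M) : C.selected κ h G₀ hhb v ⊆ C.ch v := by
  intro c hc
  simp only [selected, Set.mem_iUnion] at hc
  obtain ⟨z, _, hc⟩ := hc
  exact (C.pick_subset κ G₀ v z hc).1

lemma selected_finite (v : M) : (C.selected κ h G₀ hhb v).Finite :=
  Set.Finite.biUnion (C.Reps_finite κ h G₀ hhb) (fun z _ => C.pick_finite κ G₀ v z)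

/-- fine-level count preservation -/
lemma selected_fine (v z' : M) :
    tmin κ {c | c ∈ C.selected κ h G₀ hhb v ∧ C.EM κ G₀ c z'} =
    tmin κ (C.cls κ G₀ v z') := by
  obtain ⟨z, hzR, hz⟩ := C.Reps_covers κ h G₀ hhb z'
  have hclseq : C.cls κ G₀ v z' = C.cls κ G₀ v z := by
    ext c
    simp only [cls, Set.mem_setOf_eq, and_congr_right_iff]
    intro _; exact C.EM_class_eq κ hz c
  have hseteq : {c | c ∈ C.selected κ h G₀ hhb v ∧ C.EM κ G₀ c z'} =
      {c | c ∈ C.selected κ h G₀ hhb v ∧ C.EM κ G₀ c z} := by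
    ext c
    simp only [Set.mem_setOf_eq, and_congr_right_iff]
    intro _; exact C.EM_class_eq κ hz c
  rw [hclseq, hseteq]
  apply le_antisymm
  · apply tmin_mono
    intro c hc
    exact ⟨C.selected_subset κ h G₀ hhb v hc.1, hc.2⟩
  · calc tmin κ (C.cls κ G₀ v z)
        = min ((C.pick κ G₀ v z).encard) (κ : ℕ∞) := by
          rw [C.pick_encard]
          simp only [tmin]
          rw [min_assoc, min_self]
      _ ≤ tmin κ {c | c ∈ C.selected κ h G₀ hhb v ∧ C.EM κ G₀ c z} := by
          apply min_le_min _ le_rfl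
          apply Set.encard_mono
          intro c hc
          refine ⟨Set.mem_biUnion hzR hc, (C.pick_subset κ G₀ v z hc).2⟩

/-- coarse-level count preservation for saturated classes -/
lemma selected_coarse (v : M) (CC : Set M)
    (hsat : ∀ c c', c ∈ CC → C.EM κ G₀ c' c → c' ∈ CC) :
    tmin κ {c | c ∈ C.selected κ h G₀ hhb v ∧ c ∈ CC} =
    tmin κ {c | c ∈ C.ch v ∧ c ∈ CC} := by
  by_cases hbig : ∃ z, z ∈ C.ch v ∧ z ∈ CC ∧ (κ : ℕ∞) ≤ (C.cls κ G₀ v z).encard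
  · obtain ⟨z, hzch, hzCC, hz⟩ := hbig
    have h1 : tmin κ (C.cls κ G₀ v z) = (κ : ℕ∞) := min_eq_right hz
    have h2 : (κ : ℕ∞) ≤ {c | c ∈ C.selected κ h G₀ hhb v ∧ C.EM κ G₀ c z}.encard := by
      have hf := C.selected_fine κ h G₀ hhb v z
      rw [h1] at hf
      calc (κ : ℕ∞) = tmin κ {c | c ∈ C.selected κ h G₀ hhb v ∧ C.EM κ G₀ c z} := hf.symm
        _ ≤ _ := tmin_le_encard κ _
    have hsub1 : {c | c ∈ C.selected κ h G₀ hhb v ∧ C.EM κ G₀ c z} ⊆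
        {c | c ∈ C.selected κ h G₀ hhb v ∧ c ∈ CC} :=
      fun c hc => ⟨hc.1, hsat z c hzCC hc.2⟩
    have hsub2 : C.cls κ G₀ v z ⊆ {c | c ∈ C.ch v ∧ c ∈ CC} :=
      fun c hc => ⟨hc.1, hsat z c hzCC hc.2⟩
    have e1 : tmin κ {c | c ∈ C.selected κ h G₀ hhb v ∧ c ∈ CC} = (κ : ℕ∞) :=
      min_eq_right (h2.trans (Set.encard_mono hsub1))
    have e2 : tmin κ {c | c ∈ C.ch v ∧ c ∈ CC} = (κ : ℕ∞) :=
      min_eq_right ((hz.trans (Set.encard_mono hsub2)))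
    rw [e1, e2]
  · push_neg at hbig
    have hsub : {c | c ∈ C.ch v ∧ c ∈ CC} ⊆ C.selected κ h G₀ hhb v := by
      intro z hz
      have hlt : (C.cls κ G₀ v z).encard < (κ : ℕ∞) := hbig z hz.1 hz.2
      have heq : {c | c ∈ C.selected κ h G₀ hhb v ∧ C.EM κ G₀ c z} = C.cls κ G₀ v z := by
        apply Set.Finite.eq_of_subset_of_encard_le'
        · rw [← Set.encard_lt_top_iff]
          exact hlt.trans (by simp)
        · intro c hc
          exact ⟨C.selected_subset κ h G₀ hhb v hc.1, hc.2⟩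
        · have := C.selected_fine κ h G₀ hhb v z
          have h1 : tmin κ (C.cls κ G₀ v z) = (C.cls κ G₀ v z).encard := min_eq_left hlt.le
          rw [h1] at this
          calc (C.cls κ G₀ v z).encard = tmin κ _ := this.symm
            _ ≤ _ := tmin_le_encard κ _
      have hzin : z ∈ C.cls κ G₀ v z := ⟨hz.1, C.EM_refl κ G₀ z⟩
      rw [← heq] at hzin
      exact hzin.1
    have : {c | c ∈ C.selected κ h G₀ hhb v ∧ c ∈ CC} = {c | c ∈ C.ch v ∧ c ∈ CC} := by
      apply Set.Subset.antisymm
      · intro c hc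
        exact ⟨C.selected_subset κ h G₀ hhb v hc.1, hc.2⟩
      · intro c hc
        exact ⟨hsub hc, hc.2⟩
    rw [this]

end Sel

section S
variable (κ h G₀ : ℕ) (hhb : ∀ x : M, C.ht x ≤ h)

/-- membership in the pruned finite subtree -/
inductive InS (C : Ctx M) (κ h G₀ : ℕ) (hhb : ∀ x : M, C.ht x ≤ h) : M → Prop
  | root : InS C κ h G₀ hhb C.r
  | child (v c : M) : InS C κ h G₀ hhb v → c ∈ C.selected κ h G₀ hhb v → InS C κ h G₀ hhb c

lemma InS_pred_closed {x : M} (hx : C.InS κ h G₀ hhb x) :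
    ∀ w, C.le w x → C.InS κ h G₀ hhb w := by
  induction hx with
  | root =>
    intro w hw
    have : w = C.r := C.hanti _ _ hw (C.hroot w)
    rw [this]; exact InS.root
  | child v c hv hc ih =>
    intro w hw
    by_cases hwc : w = c
    · rw [hwc]; exact InS.child v c hv hc
    · exact ih w (C.pred_of_le_child (C.selected_subset κ h G₀ hhb v hc) hw hwc)

lemma InS_level_finite (j : ℕ) : {x | C.InS κ h G₀ hhb x ∧ C.ht x = j}.Finite := by
  induction j with
  | zero =>
    apply Set.Finite.subset (Set.finite_singleton C.r)
    rintro x ⟨_, hx⟩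
    exact C.eq_root_of_ht_zero hx
  | succ j ih =>
    apply Set.Finite.subset (Set.Finite.biUnion ih
      (fun v _ => C.selected_finite κ h G₀ hhb v))
    rintro x ⟨hx, hhtx⟩
    cases hx with
    | root =>
      exfalso
      have := C.ht_root
      omega
    | child v c hv hc =>
      have hch := C.selected_subset κ h G₀ hhb v hc
      have : C.ht v = j := by have := hch.2; omega
      exact Set.mem_biUnion (x := v) ⟨hv, this⟩ hc

lemma InS_finite : {x | C.InS κ h G₀ hhb x}.Finite := by
  apply Set.Finite.subset (Set.Finite.biUnion (Set.finite_Iic h)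
    (fun j (_ : j ∈ Set.Iic h) => C.InS_level_finite κ h G₀ hhb j))
  intro x hx
  exact Set.mem_biUnion (x := C.ht x) (hhb x) ⟨hx, rfl⟩

lemma InS_root : C.InS κ h G₀ hhb C.r := InS.root

lemma chS_eq_selected {v : M} (hv : C.InS κ h G₀ hhb v) :
    {c | c ∈ C.ch v ∧ C.InS κ h G₀ hhb c} = C.selected κ h G₀ hhb v := by
  ext c
  simp only [Set.mem_setOf_eq]
  constructor
  · rintro ⟨hch, hc⟩
    cases hc with
    | root =>
      exfalso
      have := C.ht_root
      have := hch.2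
      omega
    | child v' c hv' hc =>
      have : v' = v := C.parent_unique (C.selected_subset κ h G₀ hhb v' hc) hch
      rw [← this]; exact hc
  · intro hc
    exact ⟨C.selected_subset κ h G₀ hhb v hc, InS.child v c hv hc⟩

end S

section F
variable (κ : ℕ) (SS : Set M)

/-- graded equivalence between an `M`-subtree and a pruned subtree -/
def F (C : Ctx M) (κ : ℕ) (SS : Set M) : ℕ → M → M → Prop
  | 0 => fun x y => C.ht x = C.ht y
  | (g+1) => fun x y => F C κ SS g x y ∧
      ∀ z, tmin κ {c | c ∈ C.ch x ∧ C.EM κ g c z} =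
           tmin κ {c | c ∈ C.ch y ∧ c ∈ SS ∧ C.EM κ g c z}

lemma F_ht {g : ℕ} {x y : M} (hf : C.F κ SS g x y) : C.ht x = C.ht y := by
  induction g with
  | zero => exact hf
  | succ g ih => exact ih hf.1

lemma F_mono {g g' : ℕ} (hg : g' ≤ g) {x y : M} (hf : C.F κ SS g x y) : C.F κ SS g' x y := by
  induction g with
  | zero => cases Nat.le_zero.mp hg; exact hf
  | succ g ih =>
    rcases Nat.lt_or_ge g' (g+1) with h' | h'
    · exact ih (by omega) hf.1
    · have : g' = g + 1 := by omega
      subst this; exact hf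

lemma F_of_EM {g : ℕ} {x x' y : M} (he : C.EM κ g x x') (hf : C.F κ SS g x' y) :
    C.F κ SS g x y := by
  induction g generalizing x x' y with
  | zero => exact (C.EM_ht κ he).trans hf
  | succ g ih =>
    refine ⟨ih he.1 hf.1, fun z => (he.2 z).trans (hf.2 z)⟩

lemma EM_of_F {g : ℕ} {x x' y : M} (h1 : C.F κ SS g x y) (h2 : C.F κ SS g x' y) :
    C.EM κ g x x' := by
  induction g generalizing x x' y with
  | zero => exact h1.trans h2.symm
  | succ g ih =>
    exact ⟨ih h1.1 h2.1, fun z => (h1.2 z).trans (h2.2 z).symm⟩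

end F

section PL
variable (κ h G₀ : ℕ) (hhb : ∀ x : M, C.ht x ≤ h)

/-- the pruning lemma: a node of the pruned subtree is `F`-equivalent to itself -/
lemma F_self {y : M} (hy : C.InS κ h G₀ hhb y) {g : ℕ} (hg : g ≤ G₀) :
    C.F κ {x | C.InS κ h G₀ hhb x} g y y := by
  induction g with
  | zero => rfl
  | succ g ih =>
    refine ⟨ih (by omega), fun z => ?_⟩
    have hseteq : {c | c ∈ C.ch y ∧ c ∈ {x | C.InS κ h G₀ hhb x} ∧ C.EM κ g c z} =
        {c | c ∈ C.selected κ h G₀ hhb y ∧ c ∈ {c | C.EM κ g c z}} := by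
      rw [← C.chS_eq_selected κ h G₀ hhb hy]
      ext c
      simp only [Set.mem_setOf_eq]
      tauto
    rw [hseteq, C.selected_coarse κ h G₀ hhb y {c | C.EM κ g c z}
      (fun c c' hc hcc' => C.EM_trans κ (C.EM_mono κ (by omega) hcc') hc)]
    rfl

end PL

section Inv
variable (κ h G₀ : ℕ) (hhb : ∀ x : M, C.ht x ≤ h)

end Inv
end Ctx

/-- the Ehrenfeucht–Fraïssé game invariant -/
structure Inv {M : Type} (C : Ctx M) (κ h G₀ : ℕ) (hhb : ∀ x : M, C.ht x ≤ h)
    (g σ : ℕ) (X : Set M) (f : M → M) : Prop where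
  fin : X.Finite
  card : X.encard ≤ (σ : ℕ∞)
  root_mem : C.r ∈ X
  gle : g ≤ G₀
  predcl : ∀ u ∈ X, ∀ w, C.le w u → w ∈ X
  maps : ∀ u ∈ X, C.InS κ h G₀ hhb (f u)
  hteq : ∀ u ∈ X, C.ht (f u) = C.ht u
  iso : ∀ u ∈ X, ∀ w ∈ X, (C.le u w ↔ C.le (f u) (f w))
  inj : Set.InjOn f X
  grade : ∀ u ∈ X, C.F κ {x | C.InS κ h G₀ hhb x} g u (f u)

namespace Inv
variable {M : Type} {C : Ctx M} {κ h G₀ : ℕ} {hhb : ∀ x : M, C.ht x ≤ h}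
variable {g σ : ℕ} {X : Set M} {f : M → M}

lemma mono (hI : Inv C κ h G₀ hhb g σ X f) {g' σ' : ℕ} (hg : g' ≤ g) (hσ : σ ≤ σ') :
    Inv C κ h G₀ hhb g' σ' X f :=
  { hI with
    card := hI.card.trans (by exact_mod_cast Nat.cast_le.mpr hσ)
    gle := hg.trans hI.gle
    grade := fun u hu => C.F_mono κ _ hg (hI.grade u hu) }

lemma f_root (hI : Inv C κ h G₀ hhb g σ X f) : f C.r = C.r := by
  apply C.eq_root_of_ht_zero
  rw [hI.hteq _ hI.root_mem, C.ht_root]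

/-- the image of X is predecessor-closed among images -/
lemma pred_image (hI : Inv C κ h G₀ hhb g σ X f) {u : M} (hu : u ∈ X) {w' : M}
    (hw' : C.le w' (f u)) : ∃ u' ∈ X, f u' = w' ∧ C.le u' u := by
  have hj : C.ht w' ≤ C.ht u := by
    have := C.ht_le hw'
    rw [hI.hteq _ hu] at this
    exact this
  obtain ⟨u', hu'le, hu'ht⟩ := C.predAt hj
  have hu'X : u' ∈ X := hI.predcl u hu u' hu'le
  refine ⟨u', hu'X, ?_, hu'le⟩
  have h1 : C.le (f u') (f u) := (hI.iso u' hu'X u hu).mp hu'le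
  apply C.comparable_eq h1 hw'
  rw [hI.hteq _ hu'X, hu'ht]

/-- matched children are EM-equivalent to their partners -/
lemma em_partner (hI : Inv C κ h G₀ hhb g σ X f) {w : M} (hw : w ∈ X) :
    C.EM κ g w (f w) := by
  apply C.EM_of_F κ {x | C.InS κ h G₀ hhb x} (hI.grade w hw)
  exact C.F_self κ h G₀ hhb (hI.maps w hw) hI.gle

/-- the used children of `f m` correspond exactly to the used children of `m`,
classwise -/
lemma used_image (hI : Inv C κ h G₀ hhb (g+1) σ X f) {m : M} (hm : m ∈ X) (z : M) :
    f '' ({c | c ∈ C.ch m ∧ C.EM κ g c z} ∩ X) =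
    {c | c ∈ C.ch (f m) ∧ c ∈ {x | C.InS κ h G₀ hhb x} ∧ C.EM κ g c z} ∩ (f '' X) := by
  have hgle : g ≤ G₀ := Nat.le_of_succ_le hI.gle
  ext b'
  constructor
  · rintro ⟨w, ⟨⟨hwch, hwEM⟩, hwX⟩, rfl⟩
    have hfwch : f w ∈ C.ch (f m) := by
      refine ⟨(hI.iso m hm w hwX).mp hwch.1, ?_⟩
      rw [hI.hteq _ hwX, hI.hteq _ hm, hwch.2]
    have hEMw : C.EM κ g w (f w) := C.EM_mono κ (Nat.le_succ g) (hI.em_partner hwX)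
    exact ⟨⟨hfwch, hI.maps w hwX, C.EM_trans κ (C.EM_symm κ hEMw) hwEM⟩,
      Set.mem_image_of_mem f hwX⟩
  · rintro ⟨⟨hbch, hbS, hbEM⟩, w, hwX, rfl⟩
    have hEMw : C.EM κ g w (f w) := C.EM_mono κ (Nat.le_succ g) (hI.em_partner hwX)
    have hwch : w ∈ C.ch m := by
      refine ⟨(hI.iso m hm w hwX).mpr hbch.1, ?_⟩
      have h1 := hI.hteq _ hwX
      have h2 := hI.hteq _ hm
      have := hbch.2
      omega
    exact ⟨w, ⟨⟨hwch, C.EM_trans κ hEMw hbEM⟩, hwX⟩, rfl⟩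

/-- inserting a matched fresh pair of children preserves the invariant -/
lemma insert_pair (hI : Inv C κ h G₀ hhb (g+1) σ X f) {m a b : M} (hm : m ∈ X)
    (ha : a ∈ C.ch m) (haX : a ∉ X) (hb : b ∈ C.ch (f m))
    (hbS : C.InS κ h G₀ hhb b) (hbY : b ∉ f '' X)
    (hF : C.F κ {x | C.InS κ h G₀ hhb x} g a b) :
    Inv C κ h G₀ hhb g (σ+1) (insert a X) (Function.update f a b) := by
  have fact1 : ∀ w ∈ X, (C.le w a ↔ C.le w m) := by
    intro w hw
    constructor
    · intro hwa
      exact C.pred_of_le_child ha hwa (fun he => haX (he ▸ hw))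
    · intro hwm
      exact C.htrans _ _ _ hwm ha.1
  have fact2 : ∀ w ∈ X, ¬ C.le a w := by
    intro w hw hle
    exact haX (hI.predcl w hw a hle)
  have fact1' : ∀ w ∈ X, (C.le (f w) b ↔ C.le (f w) (f m)) := by
    intro w hw
    constructor
    · intro hwb
      exact C.pred_of_le_child hb hwb (fun he => hbY (he ▸ Set.mem_image_of_mem f hw))
    · intro hwm
      exact C.htrans _ _ _ hwm hb.1
  have fact2' : ∀ w ∈ X, ¬ C.le b (f w) := by
    intro w hw hle
    obtain ⟨u', hu'X, he, _⟩ := hI.pred_image hw hle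
    exact hbY ⟨u', hu'X, he⟩
  have hne : ∀ w ∈ X, w ≠ a := fun w hw he => haX (he ▸ hw)
  have hupd : ∀ w ∈ X, Function.update f a b w = f w := fun w hw =>
    Function.update_of_ne (hne w hw) b f
  have hupda : Function.update f a b a = b := Function.update_self a b f
  have hhtab : C.ht b = C.ht a := by
    have h1 := hb.2
    have h2 := ha.2
    have h3 := hI.hteq _ hm
    omega
  refine
    { fin := hI.fin.insert a
      card := ?_
      root_mem := Set.mem_insert_of_mem a hI.root_mem
      gle := Nat.le_of_succ_le hI.gle
      predcl := ?_
      maps := ?_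
      hteq := ?_
      iso := ?_
      inj := ?_
      grade := ?_ }
  · calc (insert a X).encard ≤ X.encard + 1 := Set.encard_insert_le X a
      _ ≤ (σ : ℕ∞) + 1 := by exact add_le_add_left hI.card 1
      _ = ((σ + 1 : ℕ) : ℕ∞) := by push_cast; ring
  · rintro u (rfl | huX) w hw
    · by_cases hwa : w = u
      · exact hwa ▸ Set.mem_insert _ _
      · exact Set.mem_insert_of_mem _ (hI.predcl m hm w (C.pred_of_le_child ha hw hwa))
    · exact Set.mem_insert_of_mem _ (hI.predcl u huX w hw)
  · rintro u (rfl | huX)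
    · rw [hupda]; exact hbS
    · rw [hupd u huX]; exact hI.maps u huX
  · rintro u (rfl | huX)
    · rw [hupda]; exact hhtab
    · rw [hupd u huX]; exact hI.hteq u huX
  · rintro u (rfl | huX) w (rfl | hwX)
    · rw [hupda]
      simp [C.hrefl]
    · rw [hupda, hupd w hwX]
      constructor
      · intro hle; exact absurd hle (fact2 w hwX)
      · intro hle; exact absurd hle (fact2' w hwX)
    · rw [hupda, hupd u huX]
      rw [fact1 u huX, fact1' u huX]
      exact hI.iso u huX m hm
    · rw [hupd u huX, hupd w hwX]
      exact hI.iso u huX w hwX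
  · rintro u (rfl | huX) w (rfl | hwX) hye
    · rfl
    · rw [hupda, hupd w hwX] at hye
      exact absurd ⟨w, hwX, hye.symm⟩ hbY
    · rw [hupda, hupd u huX] at hye
      exact absurd ⟨u, huX, hye⟩ hbY
    · exact hI.inj huX hwX (by rw [hupd u huX, hupd w hwX] at hye; exact hye)
  · rintro u (rfl | huX)
    · rw [hupda]; exact hF
    · rw [hupd u huX]
      exact C.F_mono κ _ (Nat.le_succ g) (hI.grade u huX)


/-- ℕ∞ counting: produce a fresh matched child on the pruned side -/
lemma step_forth (hI : Inv C κ h G₀ hhb (g+1) σ X f) (hσ : σ < κ) {m a : M}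
    (hm : m ∈ X) (ha : a ∈ C.ch m) (haX : a ∉ X) :
    ∃ b, b ∈ C.ch (f m) ∧ C.InS κ h G₀ hhb b ∧ b ∉ f '' X ∧
      C.F κ {x | C.InS κ h G₀ hhb x} g a b := by
  have hgle : g ≤ G₀ := Nat.le_of_succ_le hI.gle
  set A : Set M := {c | c ∈ C.ch m ∧ C.EM κ g c a} with hA
  set B : Set M := {c | c ∈ C.ch (f m) ∧ c ∈ {x | C.InS κ h G₀ hhb x} ∧ C.EM κ g c a}
    with hB
  have hcnt : Ctx.tmin κ A = Ctx.tmin κ B := (hI.grade m hm).2 a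
  by_contra hno
  push_neg at hno
  have hBsub : B ⊆ f '' X := by
    intro b hbB
    by_contra hbY
    have hFab : C.F κ {x | C.InS κ h G₀ hhb x} g a b :=
      C.F_of_EM κ _ (C.EM_symm κ hbB.2.2) (C.F_self κ h G₀ hhb hbB.2.1 hgle)
    exact hno b hbB.1 hbB.2.1 hbY hFab
  have hUA : f '' (A ∩ X) = B := by
    rw [hI.used_image hm a]
    exact Set.inter_eq_self_of_subset_left hBsub
  have e1 : B.encard = (A ∩ X).encard := by
    rw [← hUA]
    exact (hI.inj.mono Set.inter_subset_right).encard_image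
  have hUAle : (A ∩ X).encard ≤ (σ : ℕ∞) :=
    le_trans (Set.encard_mono Set.inter_subset_right) hI.card
  have hUAne : (A ∩ X).encard ≠ ⊤ := fun he => by
    rw [he] at hUAle
    exact (ENat.coe_ne_top σ) (le_antisymm hUAle le_top).symm
  have e2 : (A ∩ X).encard + 1 ≤ A.encard := by
    rw [← Set.encard_insert_of_notMem (fun hc => haX hc.2)]
    apply Set.encard_mono
    exact Set.insert_subset (show a ∈ A from by rw [hA]; exact ⟨ha, C.EM_refl κ g a⟩) Set.inter_subset_left
  have hk : (σ : ℕ∞) + 1 ≤ (κ : ℕ∞) := by exact_mod_cast Nat.succ_le_of_lt hσ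
  have h3 : (A ∩ X).encard + 1 ≤ Ctx.tmin κ A :=
    le_min e2 (le_trans (add_le_add_left hUAle 1) hk)
  have h4 : Ctx.tmin κ B ≤ (A ∩ X).encard := le_trans (Ctx.tmin_le_encard κ B) e1.le
  rw [hcnt] at h3
  have := le_trans h3 h4
  rw [ENat.add_one_le_iff hUAne] at this
  exact lt_irrefl _ this

/-- ℕ∞ counting: produce a fresh matched child on the full side -/
lemma step_back (hI : Inv C κ h G₀ hhb (g+1) σ X f) (hσ : σ < κ) {m b : M}
    (hm : m ∈ X) (hb : b ∈ C.ch (f m)) (hbS : C.InS κ h G₀ hhb b) (hbY : b ∉ f '' X) :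
    ∃ a, a ∈ C.ch m ∧ a ∉ X ∧ C.F κ {x | C.InS κ h G₀ hhb x} g a b := by
  have hgle : g ≤ G₀ := Nat.le_of_succ_le hI.gle
  set A : Set M := {c | c ∈ C.ch m ∧ C.EM κ g c b} with hA
  set B : Set M := {c | c ∈ C.ch (f m) ∧ c ∈ {x | C.InS κ h G₀ hhb x} ∧ C.EM κ g c b}
    with hB
  have hcnt : Ctx.tmin κ A = Ctx.tmin κ B := (hI.grade m hm).2 b
  by_contra hno
  push_neg at hno
  have hAsub : A ⊆ X := by
    intro a haA
    by_contra haX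
    have hFab : C.F κ {x | C.InS κ h G₀ hhb x} g a b :=
      C.F_of_EM κ _ haA.2 (C.F_self κ h G₀ hhb hbS hgle)
    exact hno a haA.1 haX hFab
  have hUA : f '' A = B ∩ (f '' X) := by
    rw [← hI.used_image hm b, Set.inter_eq_self_of_subset_left hAsub]
  have e1 : (B ∩ (f '' X)).encard = A.encard := by
    rw [← hUA]
    exact (hI.inj.mono hAsub).encard_image
  have hAle : A.encard ≤ (σ : ℕ∞) :=
    le_trans (Set.encard_mono hAsub) hI.card
  have hAne : A.encard ≠ ⊤ := fun he => by
    rw [he] at hAle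
    exact (ENat.coe_ne_top σ) (le_antisymm hAle le_top).symm
  have e2 : A.encard + 1 ≤ B.encard := by
    rw [← e1, ← Set.encard_insert_of_notMem (fun hc : b ∈ B ∩ (f '' X) => hbY hc.2)]
    apply Set.encard_mono
    exact Set.insert_subset (show b ∈ B from by rw [hB]; exact ⟨hb, hbS, C.EM_refl κ g b⟩) Set.inter_subset_left
  have hk : (σ : ℕ∞) + 1 ≤ (κ : ℕ∞) := by exact_mod_cast Nat.succ_le_of_lt hσ
  have h3 : A.encard + 1 ≤ Ctx.tmin κ B :=
    le_min e2 (le_trans (add_le_add_left hAle 1) hk)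
  have h4 : Ctx.tmin κ A ≤ A.encard := Ctx.tmin_le_encard κ A
  rw [← hcnt] at h3
  have := le_trans h3 h4
  rw [ENat.add_one_le_iff hAne] at this
  exact lt_irrefl _ this


/-- multi-step forward extension along the path towards `a` -/
lemma move_forth : ∀ (k : ℕ) {g σ : ℕ} {X : Set M} {f : M → M},
    Inv C κ h G₀ hhb (g + k) σ X f → σ + k ≤ κ →
    ∀ {m a : M}, m ∈ X → C.le m a → C.ht a = C.ht m + k →
    (∀ w ∈ X, C.le w a → C.le w m) →
    ∃ X' f', Inv C κ h G₀ hhb g (σ + k) X' f' ∧ X ⊆ X' ∧ a ∈ X' ∧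
      (∀ u ∈ X, f' u = f u) := by
  intro k
  induction k with
  | zero =>
    intro g σ X f hI _ m a hm hle hht _
    have : m = a := C.eq_of_le_ht hle (by omega)
    exact ⟨X, f, by simpa using hI, le_refl X, this ▸ hm, fun u _ => rfl⟩
  | succ k ih =>
    intro g σ X f hI hκ m a hm hle hht hmax
    have hne : m ≠ a := fun he => by rw [he] at hht; omega
    obtain ⟨c, hcch, hca⟩ := C.child_step hle hne
    have hcX : c ∉ X := by
      intro hcX
      have := C.ht_le (hmax c hcX hca)
      have := hcch.2
      omega
    have hI' : Inv C κ h G₀ hhb ((g + k) + 1) σ X f := by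
      have : g + (k + 1) = (g + k) + 1 := by omega
      rwa [this] at hI
    obtain ⟨b, hbch, hbS, hbY, hbF⟩ := hI'.step_forth (by omega) hm hcch hcX
    have hI2 := hI'.insert_pair hm hcch hcX hbch hbS hbY hbF
    obtain ⟨X', f', hI3, hsub, haX', hext⟩ := ih hI2 (by omega)
      (Set.mem_insert c X) hca (by have := hcch.2; omega)
      (by
        rintro w (rfl | hwX) hwa
        · exact C.hrefl w
        · exact C.htrans _ _ _ (hmax w hwX hwa) hcch.1)
    refine ⟨X', f', by
      have : σ + 1 + k = σ + (k+1) := by omega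
      rwa [this] at hI3, (Set.subset_insert c X).trans hsub, haX', ?_⟩
    intro u hu
    rw [hext u (Set.mem_insert_of_mem c hu)]
    exact Function.update_of_ne (show u ≠ c by rintro rfl; exact hcX hu) b f

/-- multi-step backward extension along the path towards `b` -/
lemma move_back : ∀ (k : ℕ) {g σ : ℕ} {X : Set M} {f : M → M},
    Inv C κ h G₀ hhb (g + k) σ X f → σ + k ≤ κ →
    ∀ {m b : M}, m ∈ X → C.InS κ h G₀ hhb b → C.le (f m) b → C.ht b = C.ht m + k →
    (∀ w ∈ X, C.le (f w) b → C.le (f w) (f m)) →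
    ∃ X' f' a, Inv C κ h G₀ hhb g (σ + k) X' f' ∧ X ⊆ X' ∧ a ∈ X' ∧ f' a = b ∧
      (∀ u ∈ X, f' u = f u) := by
  intro k
  induction k with
  | zero =>
    intro g σ X f hI _ m b hm hbS hle hht _
    have : f m = b := C.eq_of_le_ht hle (by rw [hI.hteq m hm]; omega)
    exact ⟨X, f, m, by simpa using hI, le_refl X, hm, this, fun u _ => rfl⟩
  | succ k ih =>
    intro g σ X f hI hκ m b hm hbS hle hht hmax
    have hfmht : C.ht (f m) = C.ht m := hI.hteq m hm
    have hne : f m ≠ b := fun he => by rw [he] at hfmht; omega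
    obtain ⟨c, hcch, hcb⟩ := C.child_step hle hne
    have hcS : C.InS κ h G₀ hhb c := C.InS_pred_closed κ h G₀ hhb hbS c hcb
    have hcY : c ∉ f '' X := by
      rintro ⟨w, hwX, rfl⟩
      have h1 := C.ht_le (hmax w hwX hcb)
      have h2 := hcch.2
      omega
    have hI' : Inv C κ h G₀ hhb ((g + k) + 1) σ X f := by
      have : g + (k + 1) = (g + k) + 1 := by omega
      rwa [this] at hI
    obtain ⟨a, hach, haX, haF⟩ := hI'.step_back (by omega) hm hcch hcS hcY
    have hI2 := hI'.insert_pair hm hach haX hcch hcS hcY haF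
    have hfa : Function.update f a c a = c := Function.update_self a c f
    obtain ⟨X', f', a', hI3, hsub, haX', hfa', hext⟩ := ih hI2 (by omega)
      (Set.mem_insert a X) hbS (by rw [hfa]; exact hcb)
      (by have := hach.2; omega)
      (by
        rintro w (rfl | hwX) hw
        · exact C.hrefl _
        · rw [Function.update_of_ne (show w ≠ a by rintro rfl; exact haX hwX) c f] at hw ⊢
          rw [hfa]
          exact C.htrans _ _ _ (hmax w hwX hw) hcch.1)
    refine ⟨X', f', a', by
      have : σ + 1 + k = σ + (k+1) := by omega
      rwa [this] at hI3, (Set.subset_insert a X).trans hsub, haX', hfa', ?_⟩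
    intro u hu
    rw [hext u (Set.mem_insert_of_mem a hu)]
    exact Function.update_of_ne (show u ≠ a by rintro rfl; exact haX hu) c f

end Inv
namespace Ctx
variable {M : Type} (C : Ctx M)
end Ctx
end TreePF

/-- finite-height trees as partial orders `(T, ≤)` are pseudofinite: every sentence
in the language `{≤}` true in some tree of finite height is true in some finite tree. -/
theorem finite_height_trees_pseudofinite_le (φ : LLE.Sentence)
    (hφ : ∃ (M : Type) (s : LLE.Structure M), IsOrderTree M s ∧
      (∃ h : ℕ, OrderHeightLe M s h) ∧ @Sentence.Realize LLE M s φ) :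
    ∃ (N : Type) (s : LLE.Structure N), IsOrderTree N s ∧ Finite N ∧
      @Sentence.Realize LLE N s φ := by
  classical
  obtain ⟨M, s, ⟨hrefl, hanti, htrans, ⟨r, hr⟩, hfin, hlin⟩, ⟨h, hhb⟩, hsat⟩ := hφ
  set C : TreePF.Ctx M := ⟨leOn s, r, hrefl, hanti, htrans, hr, hfin, hlin⟩ with hC
  have hhb' : ∀ x : M, C.ht x ≤ h := fun x => hhb x
  set n₀ : ℕ := TreePF.qr (φ : LLE.BoundedFormula Empty 0) with hn₀
  set G₀ : ℕ := (h+1)*n₀ with hG₀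
  set κ : ℕ := (h+1)*(n₀+1) + 1 with hκ
  set SS : Set M := {x | C.InS κ h G₀ hhb' x} with hSS
  have hSfin : SS.Finite := C.InS_finite κ h G₀ hhb'
  haveI : Finite ↥SS := hSfin.to_subtype
  set sN : LLE.Structure ↥SS :=
    ⟨fun {n} f _ => Empty.elim f, fun {n} R v => s.RelMap R (fun i => (v i).1)⟩ with hsN
  have hle : ∀ a b : ↥SS, leOn sN a b ↔ C.le a.1 b.1 := by
    intro a b
    have : (fun i => ((![a, b] : Fin 2 → ↥SS) i).1) = ![a.1, b.1] := by
      funext i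
      fin_cases i <;> rfl
    show s.RelMap (n := 2) () (fun i => ((![a, b] : Fin 2 → ↥SS) i).1) ↔ _
    rw [this]
    exact Iff.rfl
  have hrS : C.InS κ h G₀ hhb' C.r := TreePF.Ctx.InS.root
  refine ⟨↥SS, sN, ?_, inferInstance, ?_⟩
  · refine ⟨?_, ?_, ?_, ⟨⟨C.r, hrS⟩, ?_⟩, ?_, ?_⟩
    · intro a; rw [hle]; exact C.hrefl a.1
    · intro a b h1 h2; rw [hle] at h1 h2; exact Subtype.ext (C.hanti _ _ h1 h2)
    · intro a b c h1 h2; rw [hle] at h1 h2 ⊢; exact C.htrans _ _ _ h1 h2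
    · intro a; rw [hle]; exact C.hroot a.1
    · intro a; exact Set.toFinite _
    · intro a b c h1 h2; rw [hle] at h1 h2 ⊢; rw [hle]; exact C.hlin _ _ _ h1 h2
  -- the EF relation
  set R : ℕ → ∀ k : ℕ, (Fin k → M) → (Fin k → ↥SS) → Prop := fun n k x y =>
    n ≤ n₀ ∧ ∃ X f, TreePF.Inv C κ h G₀ hhb' ((h+1)*n) (1+(n₀-n)*h) X f ∧
      ∀ i, x i ∈ X ∧ f (x i) = (y i).1 with hR
  have hAtomLe : ∀ n k x y, R n k x y → ∀ i j : Fin k,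
      (s.RelMap (n := 2) (() : LLE.Relations 2) ![x i, x j] ↔
       sN.RelMap (n := 2) (() : LLE.Relations 2) ![y i, y j]) := by
    rintro n k x y ⟨-, X, f, hI, hp⟩ i j
    have h1 : s.RelMap (n := 2) (() : LLE.Relations 2) ![x i, x j] ↔ C.le (x i) (x j) := Iff.rfl
    have h2 : sN.RelMap (n := 2) (() : LLE.Relations 2) ![y i, y j] ↔ C.le (y i).1 (y j).1 :=
      hle (y i) (y j)
    rw [h1, h2, ← (hp i).2, ← (hp j).2]
    exact hI.iso _ (hp i).1 _ (hp j).1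
  have hAtomEq : ∀ n k x y, R n k x y → ∀ i j : Fin k, (x i = x j ↔ y i = y j) := by
    rintro n k x y ⟨-, X, f, hI, hp⟩ i j
    constructor
    · intro he
      apply Subtype.ext
      rw [← (hp i).2, ← (hp j).2, he]
    · intro he
      apply hI.inj (hp i).1 (hp j).1
      rw [(hp i).2, (hp j).2, he]
  have hForth : ∀ n k x y, R (n+1) k x y → ∀ a : M, ∃ b : ↥SS,
      R n (k+1) (Fin.snoc x a) (Fin.snoc y b) := by
    rintro n k x y ⟨hn, X, f, hI, hp⟩ a
    obtain ⟨m, hmX, hma, hmax⟩ := C.exists_max (X := X ∩ C.below a)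
      (hI.fin.subset Set.inter_subset_left)
      ⟨C.r, hI.root_mem, C.hroot a⟩ (fun w hw => hw.2)
    set k' : ℕ := C.ht a - C.ht m with hk'
    have hhtm : C.ht m ≤ C.ht a := C.ht_le hma
    have hkh : k' ≤ h := by have := hhb' a; omega
    set d : ℕ := n₀ - (n+1) with hd
    have hσ : 1 + (n₀ - (n+1))*h = 1 + d*h := rfl
    -- downgrade
    have hI1 : TreePF.Inv C κ h G₀ hhb' ((h+1)*n + k') (1+d*h) X f := by
      apply hI.mono _ le_rfl
      calc (h+1)*n + k' ≤ (h+1)*n + (h+1) := by omega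
        _ = (h+1)*(n+1) := by ring
    have hκbound : (1+d*h) + k' ≤ κ := by
      have h1 : d ≤ n₀ := by omega
      have h2 : d*h ≤ n₀*h := Nat.mul_le_mul_right h h1
      have h3 : (h+1)*(n₀+1) = n₀*h + h + n₀ + 1 := by ring
      omega
    obtain ⟨X', f', hI', hsub, haX', hext⟩ := hI1.move_forth k' (by omega)
      hmX.1 hma (by omega) (fun w hw hwa => hmax w ⟨hw, hwa⟩)
    have hI'' : TreePF.Inv C κ h G₀ hhb' ((h+1)*n) (1+(n₀-n)*h) X' f' := by
      apply hI'.mono le_rfl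
      have he : n₀ - n = d + 1 := by omega
      rw [he, add_mul, one_mul]
      omega
    refine ⟨⟨f' a, hI''.maps a haX'⟩, by omega, X', f', hI'', ?_⟩
    intro i
    refine Fin.lastCases ?_ ?_ i
    · simp only [Fin.snoc_last]
      exact ⟨haX', by trivial⟩
    · intro i
      simp only [Fin.snoc_castSucc]
      exact ⟨hsub (hp i).1, by rw [hext _ (hp i).1]; exact (hp i).2⟩
  have hBack : ∀ n k x y, R (n+1) k x y → ∀ b : ↥SS, ∃ a : M,
      R n (k+1) (Fin.snoc x a) (Fin.snoc y b) := by
    rintro n k x y ⟨hn, X, f, hI, hp⟩ b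
    have hbS : C.InS κ h G₀ hhb' b.1 := b.2
    set B' : Set M := {u | u ∈ X ∧ C.le (f u) b.1} with hB'
    have hB'ne : B'.Nonempty := ⟨C.r, hI.root_mem, by rw [hI.f_root]; exact C.hroot b.1⟩
    obtain ⟨m, hmB, hmax0⟩ := Set.exists_max_image B' C.ht
      (hI.fin.subset (fun u hu => hu.1)) hB'ne
    have hmax : ∀ w ∈ X, C.le (f w) b.1 → C.le (f w) (f m) := by
      intro w hw hwb
      apply C.le_of_le_le_ht hwb hmB.2
      rw [hI.hteq _ hw, hI.hteq _ hmB.1]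
      exact hmax0 w ⟨hw, hwb⟩
    set k' : ℕ := C.ht b.1 - C.ht m with hk'
    have hhtm : C.ht (f m) ≤ C.ht b.1 := C.ht_le hmB.2
    have hfmht : C.ht (f m) = C.ht m := hI.hteq _ hmB.1
    have hkh : k' ≤ h := by have := hhb' b.1; omega
    set d : ℕ := n₀ - (n+1) with hd
    have hI1 : TreePF.Inv C κ h G₀ hhb' ((h+1)*n + k') (1+d*h) X f := by
      apply hI.mono _ le_rfl
      calc (h+1)*n + k' ≤ (h+1)*n + (h+1) := by omega
        _ = (h+1)*(n+1) := by ring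
    have hκbound : (1+d*h) + k' ≤ κ := by
      have h1 : d ≤ n₀ := by omega
      have h2 : d*h ≤ n₀*h := Nat.mul_le_mul_right h h1
      have h3 : (h+1)*(n₀+1) = n₀*h + h + n₀ + 1 := by ring
      omega
    obtain ⟨X', f', a, hI', hsub, haX', hfa, hext⟩ := hI1.move_back k' (by omega)
      hmB.1 hbS hmB.2 (by omega) hmax
    have hI'' : TreePF.Inv C κ h G₀ hhb' ((h+1)*n) (1+(n₀-n)*h) X' f' := by
      apply hI'.mono le_rfl
      have he : n₀ - n = d + 1 := by omega
      rw [he, add_mul, one_mul]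
      omega
    refine ⟨a, by omega, X', f', hI'', ?_⟩
    intro i
    refine Fin.lastCases ?_ ?_ i
    · simp only [Fin.snoc_last]
      exact ⟨haX', hfa⟩
    · intro i
      simp only [Fin.snoc_castSucc]
      exact ⟨hsub (hp i).1, by rw [hext _ (hp i).1]; exact (hp i).2⟩
  -- the initial position
  have hR0 : R n₀ 0 default default := by
    refine ⟨le_rfl, {C.r}, id, ?_, fun i => i.elim0⟩
    refine
      { fin := Set.finite_singleton _
        card := by simp
        root_mem := rfl
        gle := by simp [hG₀]
        predcl := ?_
        maps := ?_
        hteq := ?_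
        iso := ?_
        inj := ?_
        grade := ?_ }
    · rintro u rfl w hw
      exact C.hanti _ _ hw (C.hroot w)
    · rintro u rfl; exact hrS
    · rintro u rfl; rfl
    · rintro u rfl w rfl; exact Iff.rfl
    · rintro u rfl w rfl _; rfl
    · rintro u rfl
      exact C.F_self κ h G₀ hhb' hrS (by simp [hG₀])
  have htr := TreePF.transfer s sN R hAtomLe hAtomEq hForth hBack φ n₀ le_rfl
    default default hR0
  have hdef : (fun e : Empty => e.elim) = (default : Empty → M) := funext fun e => e.elim
  have hdefN : (fun e : Empty => e.elim) = (default : Empty → ↥SS) := funext fun e => e.elim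
  show @Formula.Realize LLE ↥SS sN Empty φ default
  show @BoundedFormula.Realize LLE ↥SS sN Empty 0 φ default default
  rw [← hdefN]
  apply htr.mp
  rw [hdef]
  exact hsat
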